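/- Let α > 0, k > 1 with k > 2 - 2/α. Then as λ → 0+, ∫_0^∞ f_{k,λ}^α(x) dx converges to ∫_0^∞ f_k^α(x) dx, where f_{k,λ} is the noncentral chi-squared PDF and f_k(x) = x^{k/2-1} e^{-x/2} / (2^{k/2} Γ(k/2)) is the central chi-squared PDF. -/

import Mathlib

open Real MeasureTheory Set Filter

/-- Modified Bessel function of the first kind of order `ν`. -/
noncomputable def besselI (ν x : ℝ) : ℝ :=
  ∑' m : ℕ, (1 / ((m.factorial : ℝ) * Real.Gamma ((m : ℝ) + ν + 1))) *
    (x / 2) ^ (2 * (m : ℝ) + ν)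

/-- PDF of the noncentral chi-squared distribution with `k` degrees of freedom and
noncentrality parameter `lam`, for `x > 0`. -/
noncomputable def ncChiSqPDF (k lam x : ℝ) : ℝ :=
  (1 / 2) * Real.exp (-(x + lam) / 2) * (x / lam) ^ (k / 4 - 1 / 2) *
    besselI (k / 2 - 1) (Real.sqrt (lam * x))

/-- PDF of the central chi-squared distribution with `k` degrees of freedom, for `x > 0`. -/
noncomputable def chiSqPDF (k x : ℝ) : ℝ :=
  x ^ (k / 2 - 1) * Real.exp (-x / 2) / (2 ^ (k / 2) * Real.Gamma (k / 2))

noncomputable def gAux (k t : ℝ) : ℝ :=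
  ∑' m : ℕ, t ^ m / ((m.factorial : ℝ) * Real.Gamma ((m : ℝ) + k / 2))

lemma gammaLB {k : ℝ} (hk : 0 < k) (m : ℕ) :
    min 1 (k / 2) * Real.Gamma (k / 2) ≤ Real.Gamma ((m : ℝ) + k / 2) := by
  have hg : 0 < Real.Gamma (k / 2) := Real.Gamma_pos_of_pos (by linarith)
  induction m with
  | zero =>
    simpa using mul_le_of_le_one_left hg.le (min_le_left 1 (k / 2))
  | succ n ih =>
    have h1 : ((n + 1 : ℕ) : ℝ) + k / 2 = ((n : ℝ) + k / 2) + 1 := by push_cast; ring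
    rw [h1, Real.Gamma_add_one (by positivity)]
    rcases Nat.eq_zero_or_pos n with hn | hn
    · subst hn
      simp only [Nat.cast_zero, zero_add]
      exact mul_le_mul_of_nonneg_right (min_le_right 1 (k / 2)) hg.le
    · have h2 : (1 : ℝ) ≤ (n : ℝ) + k / 2 := by
        have : (1 : ℝ) ≤ (n : ℝ) := by exact_mod_cast hn
        linarith
      have h3 : 0 < Real.Gamma ((n : ℝ) + k / 2) := Real.Gamma_pos_of_pos (by positivity)
      nlinarith [ih]

lemma gTermBound {k : ℝ} (hk : 0 < k) (t : ℝ) (m : ℕ) :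
    ‖t ^ m / ((m.factorial : ℝ) * Real.Gamma ((m : ℝ) + k / 2))‖ ≤
      |t| ^ m / ((m.factorial : ℝ) * (min 1 (k / 2) * Real.Gamma (k / 2))) := by
  have hg : 0 < Real.Gamma ((m : ℝ) + k / 2) := Real.Gamma_pos_of_pos (by positivity)
  have hc : 0 < min 1 (k / 2) * Real.Gamma (k / 2) := by
    have := Real.Gamma_pos_of_pos (show 0 < k / 2 by linarith)
    have : (0:ℝ) < min 1 (k/2) := lt_min one_pos (by linarith)
    positivity
  have hf : (0 : ℝ) < (m.factorial : ℝ) := by exact_mod_cast m.factorial_pos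
  rw [Real.norm_eq_abs, abs_div, abs_pow, abs_of_pos (mul_pos hf hg)]
  gcongr
  exact gammaLB hk m

lemma gSummable {k : ℝ} (hk : 0 < k) (t : ℝ) :
    Summable (fun m : ℕ => t ^ m / ((m.factorial : ℝ) * Real.Gamma ((m : ℝ) + k / 2))) := by
  refine Summable.of_norm_bounded ?_ (gTermBound hk t)
  have := (Real.summable_pow_div_factorial |t|).div_const (min 1 (k / 2) * Real.Gamma (k / 2))
  simpa [div_div] using this

lemma gContinuous {k : ℝ} (hk : 0 < k) : Continuous (gAux k) := by
  rw [continuous_iff_continuousAt]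
  intro t₀
  have hR : (0:ℝ) < |t₀| + 1 := by positivity
  have hcont : ContinuousOn (gAux k) (Metric.ball 0 (|t₀| + 1)) := by
    refine continuousOn_tsum (f := fun (m : ℕ) (t : ℝ) => t ^ m / ((m.factorial : ℝ) *
        Real.Gamma ((m : ℝ) + k / 2)))
      (u := fun m => (|t₀| + 1) ^ m / ((m.factorial : ℝ) * (min 1 (k / 2) * Real.Gamma (k / 2))))
      (fun m => ((continuous_pow m).div_const _).continuousOn) ?_ ?_
    · have := (Real.summable_pow_div_factorial (|t₀| + 1)).div_const
        (min 1 (k / 2) * Real.Gamma (k / 2))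
      simpa [div_div] using this
    · intro m t ht
      refine (gTermBound hk t m).trans ?_
      have hfc : (0:ℝ) < (m.factorial : ℝ) * (min 1 (k / 2) * Real.Gamma (k / 2)) := by
        have hg := Real.Gamma_pos_of_pos (show 0 < k / 2 by linarith)
        have hm : (0:ℝ) < min 1 (k/2) := lt_min one_pos (by linarith)
        have hf : (0 : ℝ) < (m.factorial : ℝ) := by exact_mod_cast m.factorial_pos
        positivity
      rw [div_le_div_iff_of_pos_right hfc]
      refine pow_le_pow_left₀ (abs_nonneg t) ?_ m
      have := mem_ball_zero_iff.mp ht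
      rw [Real.norm_eq_abs] at this
      linarith
  exact hcont.continuousAt (Metric.isOpen_ball.mem_nhds (by simpa using by linarith))

lemma gZero {k : ℝ} : gAux k 0 = 1 / Real.Gamma (k / 2) := by
  unfold gAux
  rw [tsum_eq_single 0 (fun m hm => by simp [zero_pow hm])]
  simp

lemma gNonneg {k : ℝ} (hk : 0 < k) {t : ℝ} (ht : 0 ≤ t) : 0 ≤ gAux k t := by
  refine tsum_nonneg fun m => ?_
  have hg : 0 < Real.Gamma ((m : ℝ) + k / 2) := Real.Gamma_pos_of_pos (by positivity)
  have hf : (0 : ℝ) < (m.factorial : ℝ) := by exact_mod_cast m.factorial_pos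
  positivity

lemma gLeExp {k : ℝ} (hk : 0 < k) {t : ℝ} (ht : 0 ≤ t) :
    gAux k t ≤ Real.exp t / (min 1 (k / 2) * Real.Gamma (k / 2)) := by
  have hexp : Real.exp t = ∑' n : ℕ, t ^ n / (n.factorial : ℝ) := by
    rw [Real.exp_eq_exp_ℝ, NormedSpace.exp_eq_tsum_div]
  rw [hexp, ← tsum_div_const]
  refine Summable.tsum_le_tsum (fun m => ?_) (gSummable hk t) ?_
  · calc t ^ m / ((m.factorial : ℝ) * Real.Gamma ((m : ℝ) + k / 2))
        ≤ ‖t ^ m / ((m.factorial : ℝ) * Real.Gamma ((m : ℝ) + k / 2))‖ := le_norm_self _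
      _ ≤ |t| ^ m / ((m.factorial : ℝ) * (min 1 (k / 2) * Real.Gamma (k / 2))) := gTermBound hk t m
      _ = t ^ m / (m.factorial : ℝ) / (min 1 (k / 2) * Real.Gamma (k / 2)) := by
          rw [abs_of_nonneg ht, div_div]
  · exact (Real.summable_pow_div_factorial t).div_const _

lemma ncChiSq_eq {k lam x : ℝ} (hk : 1 < k) (hl : 0 < lam) (hx : 0 < x) :
    ncChiSqPDF k lam x =
      Real.exp (-(x + lam) / 2) * x ^ (k / 2 - 1) / 2 ^ (k / 2) * gAux k (lam * x / 4) := by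
  have hlx : 0 < lam * x := mul_pos hl hx
  unfold ncChiSqPDF besselI gAux
  rw [← tsum_mul_left, ← tsum_mul_left]
  refine tsum_congr fun m => ?_
  have hΓ : (m : ℝ) + (k / 2 - 1) + 1 = (m : ℝ) + k / 2 := by ring
  rw [hΓ]
  have hpow : (Real.sqrt (lam * x) / 2) ^ (2 * (m : ℝ) + (k / 2 - 1)) =
      (lam * x) ^ m * (lam * x) ^ (k / 4 - 1 / 2) / (4 ^ m * 2 ^ (k / 2 - 1)) := by
    rw [Real.div_rpow (Real.sqrt_nonneg _) (by norm_num : (0:ℝ) ≤ 2), Real.sqrt_eq_rpow]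
    have hnum : ((lam * x) ^ ((1:ℝ)/2)) ^ (2 * (m : ℝ) + (k / 2 - 1)) =
        (lam * x) ^ m * (lam * x) ^ (k / 4 - 1 / 2) := by
      rw [← Real.rpow_mul hlx.le,
        show (1/2 : ℝ) * (2 * (m : ℝ) + (k / 2 - 1)) = (m : ℝ) + (k / 4 - 1/2) from by ring,
        Real.rpow_add hlx, Real.rpow_natCast]
    have hden : (2:ℝ) ^ (2 * (m : ℝ) + (k / 2 - 1)) = 4 ^ m * 2 ^ (k / 2 - 1) := by
      rw [show 2 * (m : ℝ) + (k / 2 - 1) = ((2 * m : ℕ) : ℝ) + (k / 2 - 1) from by push_cast; ring,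
        Real.rpow_add two_pos, Real.rpow_natCast, pow_mul]
      norm_num
    rw [hnum, hden]
  rw [hpow]
  have hBA : (x / lam) ^ (k / 4 - 1 / 2) * (lam * x) ^ (k / 4 - 1 / 2) = x ^ (k / 2 - 1) := by
    rw [← Real.mul_rpow (by positivity) hlx.le,
      show x / lam * (lam * x) = x ^ (2:ℕ) from by field_simp,
      ← Real.rpow_natCast x 2, ← Real.rpow_mul hx.le]
    congr 1
    ring
  have hQ : (2:ℝ) ^ (k / 2) = 2 ^ (k / 2 - 1) * 2 := by
    rw [← Real.rpow_add_one two_ne_zero (k / 2 - 1)]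
    norm_num
  have h4 : (lam * x) ^ m / (4:ℝ) ^ m = (lam * x / 4) ^ m := (div_pow _ _ m).symm
  have hG : 0 < Real.Gamma ((m : ℝ) + k / 2) := Real.Gamma_pos_of_pos (by positivity)
  have hF : (0 : ℝ) < (m.factorial : ℝ) := by exact_mod_cast m.factorial_pos
  have hP2 : (0:ℝ) < (2:ℝ) ^ (k / 2 - 1) := Real.rpow_pos_of_pos two_pos _
  have hB : (0:ℝ) < (x / lam) ^ (k / 4 - 1 / 2) := Real.rpow_pos_of_pos (by positivity) _
  rw [hQ, ← h4, ← hBA]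
  field_simp

theorem tendsto_integral_ncChiSqPDF_rpow (α k : ℝ)
    (hα : 0 < α) (hk : 1 < k) (hk' : k > 2 - 2 / α) :
    Tendsto (fun lam => ∫ x in Ioi (0 : ℝ), ncChiSqPDF k lam x ^ α)
      (nhdsWithin 0 (Ioi (0 : ℝ)))
      (nhds (∫ x in Ioi (0 : ℝ), chiSqPDF k x ^ α)) := by
  have hk0 : 0 < k := lt_trans one_pos hk
  have hk2 : 0 < k / 2 := by linarith
  have hΓpos : 0 < Real.Gamma (k / 2) := Real.Gamma_pos_of_pos hk2
  set c : ℝ := min 1 (k / 2) * Real.Gamma (k / 2) with hc_def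
  have hc : 0 < c := mul_pos (lt_min one_pos hk2) hΓpos
  have hQ : (0 : ℝ) < 2 ^ (k / 2) := Real.rpow_pos_of_pos two_pos _
  have hexp_s : -1 < α * (k / 2 - 1) := by
    have h2 : α * (2 / α) = 2 := by field_simp
    nlinarith [mul_pos hα (show 0 < k - (2 - 2 / α) by linarith)]
  set bound : ℝ → ℝ := fun x => (x ^ (k / 2 - 1) * Real.exp (-x / 4) / (2 ^ (k / 2) * c)) ^ α
    with hbd
  have hbound_int : IntegrableOn bound (Ioi 0) := by
    have h1 : IntegrableOn (fun x : ℝ => x ^ (α * (k / 2 - 1)) * Real.exp (-(α / 4) * x))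
        (Ioi 0) := by
      have h := integrableOn_rpow_mul_exp_neg_mul_rpow hexp_s (one_pos : (0:ℝ) < 1)
        (show 0 < α / 4 by linarith)
      refine h.congr_fun (fun x hx => ?_) measurableSet_Ioi
      simp only [Real.rpow_one]
    have h2 : IntegrableOn
        (fun x : ℝ => (2 ^ (k / 2) * c) ^ (-α) * (x ^ (α * (k / 2 - 1)) *
          Real.exp (-(α / 4) * x))) (Ioi 0) := h1.const_mul _
    refine IntegrableOn.congr_fun h2 (fun x hx => ?_) measurableSet_Ioi
    have hx : 0 < x := hx
    show _ = (x ^ (k / 2 - 1) * Real.exp (-x / 4) / (2 ^ (k / 2) * c)) ^ α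
    symm
    have hXE : (0:ℝ) ≤ x ^ (k / 2 - 1) * Real.exp (-x / 4) := by positivity
    rw [Real.div_rpow hXE (by positivity), Real.mul_rpow (by positivity) (Real.exp_nonneg _),
      ← Real.rpow_mul hx.le, ← Real.exp_mul, div_eq_mul_inv, ← Real.rpow_neg (by positivity),
      show (k / 2 - 1) * α = α * (k / 2 - 1) from mul_comm _ _,
      show -x / 4 * α = -(α / 4) * x from by ring]
    ring
  refine MeasureTheory.tendsto_integral_filter_of_dominated_convergence bound ?_ ?_ ?_ ?_
  · -- measurability
    filter_upwards [self_mem_nhdsWithin] with lam hlam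
    have hlam : (0:ℝ) < lam := hlam
    have hmeas : ContinuousOn (fun x : ℝ =>
        (Real.exp (-(x + lam) / 2) * x ^ (k / 2 - 1) / 2 ^ (k / 2) * gAux k (lam * x / 4)) ^ α)
        (Ioi 0) := by
      apply ContinuousOn.rpow_const
      · refine ContinuousOn.mul (ContinuousOn.div_const (ContinuousOn.mul ?_ ?_) _) ?_
        · exact (Real.continuous_exp.comp (by fun_prop)).continuousOn
        · exact fun x hx =>
            (Real.continuousAt_rpow_const x _ (Or.inl (ne_of_gt hx))).continuousWithinAt
        · exact ((gContinuous hk0).comp (by fun_prop)).continuousOn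
      · exact fun x _ => Or.inr hα.le
    refine (hmeas.aestronglyMeasurable measurableSet_Ioi).congr ?_
    refine ((ae_restrict_iff' measurableSet_Ioi).2 (ae_of_all _ fun x hx => ?_))
    dsimp only
    rw [ncChiSq_eq hk hlam hx]
  · -- bound
    filter_upwards [Ioc_mem_nhdsGT_of_mem (show (0:ℝ) ∈ Ico (0:ℝ) 1 by simp)] with lam hlam
    refine (ae_restrict_iff' measurableSet_Ioi).2 (ae_of_all _ fun x hx => ?_)
    have hx : 0 < x := hx
    have hl0 : 0 < lam := hlam.1
    rw [Real.norm_eq_abs, ncChiSq_eq hk hl0 hx]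
    have hgnn : 0 ≤ gAux k (lam * x / 4) := gNonneg hk0 (by positivity)
    have h0 : (0:ℝ) ≤ Real.exp (-(x + lam) / 2) * x ^ (k / 2 - 1) / 2 ^ (k / 2) *
        gAux k (lam * x / 4) := mul_nonneg (by positivity) hgnn
    rw [abs_of_nonneg (Real.rpow_nonneg h0 α)]
    refine Real.rpow_le_rpow h0 ?_ hα.le
    calc Real.exp (-(x + lam) / 2) * x ^ (k / 2 - 1) / 2 ^ (k / 2) * gAux k (lam * x / 4)
        ≤ Real.exp (-(x + lam) / 2) * x ^ (k / 2 - 1) / 2 ^ (k / 2) *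
          (Real.exp (lam * x / 4) / c) := by
          have hle := gLeExp hk0 (show (0:ℝ) ≤ lam * x / 4 by positivity)
          have hnn : (0:ℝ) ≤ Real.exp (-(x + lam) / 2) * x ^ (k / 2 - 1) / 2 ^ (k / 2) := by
            positivity
          exact mul_le_mul_of_nonneg_left hle hnn
      _ = x ^ (k / 2 - 1) * (Real.exp (-(x + lam) / 2) * Real.exp (lam * x / 4)) /
          (2 ^ (k / 2) * c) := by ring
      _ ≤ x ^ (k / 2 - 1) * Real.exp (-x / 4) / (2 ^ (k / 2) * c) := by
          gcongr
          rw [← Real.exp_add]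
          apply Real.exp_le_exp.2
          nlinarith [mul_le_of_le_one_left hx.le hlam.2, hlam.1.le]
  · exact hbound_int
  · -- pointwise limit
    refine (ae_restrict_iff' measurableSet_Ioi).2 (ae_of_all _ fun x hx => ?_)
    have hx : 0 < x := hx
    have hcont : ContinuousAt (fun lam : ℝ =>
        Real.exp (-(x + lam) / 2) * x ^ (k / 2 - 1) / 2 ^ (k / 2) * gAux k (lam * x / 4)) 0 := by
      have hcg : Continuous fun lam : ℝ =>
          Real.exp (-(x + lam) / 2) * x ^ (k / 2 - 1) / 2 ^ (k / 2) * gAux k (lam * x / 4) := by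
        exact (((Real.continuous_exp.comp (by fun_prop)).mul continuous_const).div_const _).mul
          ((gContinuous hk0).comp (by fun_prop))
      exact hcg.continuousAt
    have h0 : Real.exp (-(x + 0) / 2) * x ^ (k / 2 - 1) / 2 ^ (k / 2) * gAux k (0 * x / 4)
        = chiSqPDF k x := by
      rw [show (0:ℝ) * x / 4 = 0 from by ring, gZero]
      unfold chiSqPDF
      rw [add_zero]
      field_simp
    have h1 : Tendsto (fun lam : ℝ =>
        Real.exp (-(x + lam) / 2) * x ^ (k / 2 - 1) / 2 ^ (k / 2) * gAux k (lam * x / 4))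
        (nhdsWithin 0 (Ioi (0:ℝ))) (nhds (chiSqPDF k x)) := by
      have := hcont.tendsto.mono_left (nhdsWithin_le_nhds (s := Ioi (0:ℝ)))
      rwa [h0] at this
    have h2 : Tendsto (fun lam : ℝ =>
        (Real.exp (-(x + lam) / 2) * x ^ (k / 2 - 1) / 2 ^ (k / 2) * gAux k (lam * x / 4)) ^ α)
        (nhdsWithin 0 (Ioi (0:ℝ))) (nhds (chiSqPDF k x ^ α)) := by
      exact ((Real.continuousAt_rpow_const _ _ (Or.inr hα.le)).tendsto.comp h1)
    refine h2.congr' ?_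
    filter_upwards [self_mem_nhdsWithin] with lam hlam
    rw [ncChiSq_eq hk hlam hx]
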